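/- Let G be a finite simple graph and let μ(G) be its Mycielskian with root w. If there is an automorphism φ of μ(G) with φ(w) ≠ w, then G is isomorphic to the star K_{1,m} for some m ≥ 0. -/

import Mathlib

open SimpleGraph

universe u

/-- A distinguishing edge coloring: no nontrivial automorphism preserves the coloring. -/
def IsDistEdgeColoring {V : Type u} (G : SimpleGraph V) {C : Type*} (c : G.edgeSet → C) : Prop :=
  ∀ φ : G ≃g G, (∀ e : G.edgeSet, c (φ.mapEdgeSet e) = c e) → ∀ v, φ v = v

/-- The distinguishing index: least number of colors in a distinguishing edge coloring. -/
noncomputable def distIndex {V : Type u} (G : SimpleGraph V) : ℕ :=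
  sInf {k : ℕ | ∃ c : G.edgeSet → Fin k, IsDistEdgeColoring G c}

/-- The star `K_{1,m}` with center `0`. -/
def starGraph (m : ℕ) : SimpleGraph (Fin (m + 1)) :=
  SimpleGraph.fromRel fun a _ => a = 0

/-- The Mycielskian: `Sum.inl a` are original vertices, `Sum.inr (Sum.inl a)` their
shadows, and `Sum.inr (Sum.inr _)` the root. -/
def myc {V : Type u} (G : SimpleGraph V) : SimpleGraph (V ⊕ V ⊕ PUnit.{u+1}) :=
  SimpleGraph.fromRel fun x y =>
    match x, y with
    | Sum.inl a, Sum.inl b => G.Adj a b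
    | Sum.inl a, Sum.inr (Sum.inl b) => G.Adj a b
    | Sum.inr (Sum.inl _), Sum.inr (Sum.inr _) => True
    | _, _ => False

/-- The generalized Mycielskian with `t` extra levels: `Sum.inl (j, a)` is the level-`j`
copy of vertex `a` (level `0` being the original vertices), and `Sum.inr _` is the root. -/
def genMyc {V : Type u} (G : SimpleGraph V) (t : ℕ) :
    SimpleGraph ((Fin (t + 1) × V) ⊕ PUnit.{u+1}) :=
  SimpleGraph.fromRel fun x y =>
    match x, y with
    | Sum.inl (j, a), Sum.inl (k, b) =>
        ((j.val = 0 ∧ k.val = 0) ∨ k.val = j.val + 1) ∧ G.Adj a b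
    | Sum.inl (j, _), Sum.inr _ => j.val = t
    | _, _ => False

section Aux
variable {V : Type u} (G : SimpleGraph V)


lemma myc_adj_vv {a b : V} : (myc G).Adj (.inl a) (.inl b) ↔ G.Adj a b := by
  simp only [myc, fromRel_adj]
  constructor
  · rintro ⟨-, h | h⟩
    · exact h
    · exact h.symm
  · exact fun h => ⟨by simpa using h.ne, Or.inl h⟩

lemma myc_adj_vu {a b : V} : (myc G).Adj (.inl a) (.inr (.inl b)) ↔ G.Adj a b := by
  simp [myc, fromRel_adj]

lemma myc_adj_uw {a : V} : (myc G).Adj (.inr (.inl a)) (.inr (.inr PUnit.unit)) := by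
  simp [myc, fromRel_adj]

lemma myc_not_adj_uu {a b : V} : ¬ (myc G).Adj (.inr (.inl a)) (.inr (.inl b)) := by
  simp [myc, fromRel_adj]

lemma myc_not_adj_vw {a : V} {p} : ¬ (myc G).Adj (.inl a) (.inr (.inr p)) := by
  simp [myc, fromRel_adj]

lemma myc_nbhd_w :
    (myc G).neighborSet (.inr (.inr PUnit.unit)) = Set.range (fun i : V => Sum.inr (Sum.inl i)) := by
  ext y
  rcases y with a | a | p
  · simp [neighborSet, (myc G).adj_comm, myc_not_adj_vw]
  · simp only [Set.mem_range, neighborSet, Set.mem_setOf_eq]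
    constructor
    · exact fun _ => ⟨a, rfl⟩
    · exact fun _ => (myc_adj_uw G).symm
  · simp [neighborSet, myc, fromRel_adj]

lemma myc_nbhd_u (k : V) :
    (myc G).neighborSet (.inr (.inl k)) =
      insert (Sum.inr (Sum.inr PUnit.unit)) (Sum.inl '' {a | G.Adj k a}) := by
  ext y
  rcases y with a | a | p
  · simp only [neighborSet, Set.mem_setOf_eq, Set.mem_insert_iff, Set.mem_image]
    rw [(myc G).adj_comm, myc_adj_vu]
    constructor
    · exact fun hy => Or.inr ⟨a, hy.symm, rfl⟩
    · rintro (h | ⟨b, hb, hb2⟩)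
      · exact absurd h (by simp)
      · cases Sum.inl.inj hb2; exact hb.symm
  · simp only [neighborSet, Set.mem_setOf_eq, Set.mem_insert_iff, Set.mem_image]
    constructor
    · exact fun hy => absurd hy (myc_not_adj_uu G)
    · rintro (h | ⟨b, hb, hb2⟩) <;> simp_all
  · simp only [neighborSet, Set.mem_setOf_eq, Set.mem_insert_iff, Set.mem_image]
    constructor
    · intro _; left; cases p; simp
    · rintro (h | ⟨b, hb, hb2⟩)
      · cases h; exact myc_adj_uw G
      · simp_all

lemma myc_nbhd_v (a : V) :
    (myc G).neighborSet (.inl a) =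
      (Sum.inl '' {c | G.Adj a c}) ∪ ((fun c : V => Sum.inr (Sum.inl c)) '' {c | G.Adj a c}) := by
  ext y
  rcases y with b | b | p
  · simp [neighborSet, myc_adj_vv]
  · simp only [neighborSet, Set.mem_setOf_eq, Set.mem_union, Set.mem_image]
    rw [myc_adj_vu]
    constructor
    · exact fun hy => Or.inr ⟨b, hy, rfl⟩
    · rintro (⟨c, hc, hc2⟩ | ⟨c, hc, hc2⟩) <;> simp_all
  · simp [neighborSet, myc_not_adj_vw]

lemma exists_star_iso [Fintype V] (c : V)
    (h1 : ∀ a, a ≠ c → G.Adj c a) (h2 : ∀ a b, a ≠ c → b ≠ c → ¬ G.Adj a b) :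
    ∃ m : ℕ, Nonempty (G ≃g _root_.starGraph m) := by
  classical
  have hcard : Fintype.card V = (Fintype.card V - 1) + 1 := by
    have : 0 < Fintype.card V := Fintype.card_pos_iff.mpr ⟨c⟩
    omega
  refine ⟨Fintype.card V - 1, ⟨?_⟩⟩
  let e0 : V ≃ Fin (Fintype.card V - 1 + 1) := Fintype.equivFinOfCardEq hcard
  let e : V ≃ Fin (Fintype.card V - 1 + 1) := e0.trans (Equiv.swap (e0 c) 0)
  have hec : e c = 0 := by simp [e]
  have hez : ∀ a, e a = 0 ↔ a = c := by
    intro a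
    constructor
    · intro ha; exact e.injective (ha.trans hec.symm)
    · rintro rfl; exact hec
  refine ⟨e, ?_⟩
  intro a b
  show (_root_.starGraph _).Adj (e a) (e b) ↔ G.Adj a b
  simp only [_root_.starGraph, fromRel_adj]
  constructor
  · rintro ⟨hne, h0 | h0⟩
    · have hb : b ≠ c := fun hb => hne (by rw [hb, hec, ← h0])
      rw [(hez a).mp h0]; exact h1 b hb
    · have ha : a ≠ c := fun ha => hne (by rw [ha, hec, ← h0])
      rw [(hez b).mp h0]; exact (h1 a ha).symm
  · intro hab
    refine ⟨fun hh => hab.ne (e.injective hh), ?_⟩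
    by_contra hcon
    push_neg at hcon
    obtain ⟨ha, hb⟩ := hcon
    exact h2 a b (fun h => ha ((hez a).mpr h)) (fun h => hb ((hez b).mpr h)) hab

section Main
variable [Fintype V]

lemma compl_singleton_ncard (k : V) : ({k}ᶜ : Set V).ncard = Fintype.card V - 1 := by
  have := Set.ncard_add_ncard_compl ({k} : Set V)
  rw [Set.ncard_singleton, Nat.card_eq_fintype_card] at this
  omega


end Main
end Aux

theorem root_not_fixed_implies_star {V : Type u} [Fintype V] (G : SimpleGraph V)
    (φ : myc G ≃g myc G)
    (h : φ (Sum.inr (Sum.inr PUnit.unit)) ≠ Sum.inr (Sum.inr PUnit.unit)) :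
    ∃ m : ℕ, Nonempty (G ≃g _root_.starGraph m) := by
  classical
  set w : V ⊕ V ⊕ PUnit.{u+1} := Sum.inr (Sum.inr PUnit.unit) with hw
  have hnw : ∀ y, (myc G).Adj w y → ∃ i : V, y = Sum.inr (Sum.inl i) := by
    intro y hy
    have hmem : y ∈ (myc G).neighborSet w := hy
    rw [myc_nbhd_w] at hmem
    obtain ⟨i, hi⟩ := hmem
    exact ⟨i, hi.symm⟩
  have hcardw : ((myc G).neighborSet w).ncard = Fintype.card V := by
    rw [myc_nbhd_w, ← Set.image_univ,
      Set.ncard_image_of_injective _ (fun x y hxy => by simpa using hxy),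
      Set.ncard_univ, Nat.card_eq_fintype_card]
  have hcard_iso : ∀ (ψ : myc G ≃g myc G) (x : V ⊕ V ⊕ PUnit.{u+1}),
      ((myc G).neighborSet x).ncard = ((myc G).neighborSet (ψ x)).ncard := by
    intro ψ x
    rw [← Nat.card_coe_set_eq, ← Nat.card_coe_set_eq]
    exact Nat.card_congr (ψ.mapNeighborSet x)
  have hcardu : ∀ k : V, ((myc G).neighborSet (Sum.inr (Sum.inl k))).ncard
      = {a | G.Adj k a}.ncard + 1 := by
    intro k
    rw [myc_nbhd_u, Set.ncard_insert_of_notMem (by simp),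
      Set.ncard_image_of_injective _ Sum.inl_injective]
  rcases hz : φ.symm w with l | k | p
  · -- φ⁻¹(w) is an original vertex
    have hfl : φ (Sum.inl l) = w := by rw [← hz]; exact φ.apply_symm_apply w
    set t := φ (Sum.inr (Sum.inl l)) with htdef
    have step1 : ∀ s, (myc G).Adj t s → s = φ w ∨ ∃ i : V, s = Sum.inr (Sum.inl i) := by
      intro s hs
      have h2 : (myc G).Adj (Sum.inr (Sum.inl l)) (φ.symm s) := by
        have := (φ.symm.map_adj_iff (v := t) (w := s)).mpr hs
        rwa [φ.symm_apply_apply] at this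
      have hmem : φ.symm s ∈ (myc G).neighborSet (Sum.inr (Sum.inl l)) := h2
      rw [myc_nbhd_u] at hmem
      rcases hmem with hm | ⟨j, hj, hj2⟩
      · left; rw [hw, ← hm, φ.apply_symm_apply]
      · right
        have hadj : (myc G).Adj (Sum.inl j) (Sum.inl l) := (myc_adj_vv G).mpr hj.symm
        have := φ.map_adj_iff.mpr hadj
        rw [hfl] at this
        have hws : (myc G).Adj w s := by
          have h3 : φ (Sum.inl j) = s := by rw [hj2, φ.apply_symm_apply]
          rw [h3] at this
          exact this.symm
        exact hnw s hws
    have htne : t ≠ w := by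
      intro hcon
      exact (by simp : (Sum.inl l : V ⊕ V ⊕ PUnit.{u+1}) ≠ Sum.inr (Sum.inl l))
        (φ.injective (hfl.trans hcon.symm))
    rcases ht : t with a | i | p2
    · -- t = inl a : the nontrivial case
      have hfw_adj : (myc G).Adj t (φ w) := by
        exact φ.map_adj_iff.mpr (myc_adj_uw G (a := l))
      have hC : ∀ c, G.Adj a c → Sum.inl c = φ w := by
        intro c hc
        have : (myc G).Adj t (Sum.inl c) := by
          rw [ht]; exact (myc_adj_vv G).mpr hc
        rcases step1 _ this with h1 | ⟨i, hi⟩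
        · exact h1
        · exact absurd hi (by simp)
      have hex : ∃ c, G.Adj a c := by
        have hmem : φ w ∈ (myc G).neighborSet (Sum.inl a) := by rw [← ht]; exact hfw_adj
        rw [myc_nbhd_v] at hmem
        rcases hmem with ⟨c, hc, -⟩ | ⟨c, hc, -⟩ <;> exact ⟨c, hc⟩
      obtain ⟨c0, hc0⟩ := hex
      have hAa : {c | G.Adj a c} = {c0} := by
        ext c
        simp only [Set.mem_setOf_eq, Set.mem_singleton_iff]
        constructor
        · intro hc
          exact Sum.inl_injective ((hC c hc).trans (hC c0 hc0).symm)
        · rintro rfl; exact hc0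
      have hNa : ((myc G).neighborSet (Sum.inl a)).ncard = 2 := by
        rw [myc_nbhd_v, hAa, Set.image_singleton, Set.image_singleton,
          Set.singleton_union, Set.ncard_pair (by simp)]
      -- |N(u_l)| = |N(v_a)| = 2, so deg_G l = 1
      have hBl : ∃ c1, {j | G.Adj l j} = {c1} := by
        have := hcard_iso φ (Sum.inr (Sum.inl l))
        rw [← htdef, ht, hNa, hcardu] at this
        rw [← Set.ncard_eq_one]
        omega
      obtain ⟨c1, hc1⟩ := hBl
      -- |N(v_l)| = |N(w)|, so card V = 2
      have hNl : ((myc G).neighborSet (Sum.inl l)).ncard = 2 := by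
        rw [myc_nbhd_v, hc1, Set.image_singleton, Set.image_singleton,
          Set.singleton_union, Set.ncard_pair (by simp)]
      have hV2 : Fintype.card V = 2 := by
        have := hcard_iso φ (Sum.inl l)
        rw [hfl, hcardw, hNl] at this
        omega
      have hadjlc1 : G.Adj l c1 := by
        have : c1 ∈ {j | G.Adj l j} := by rw [hc1]; rfl
        exact this
      have huniq : ∀ x : V, x ≠ l → x = c1 := by
        intro x hx
        have hcompl : ({l}ᶜ : Set V).ncard = 1 := by
          rw [compl_singleton_ncard, hV2]
        obtain ⟨z, hzz⟩ := Set.ncard_eq_one.mp hcompl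
        have hx' : x ∈ ({l}ᶜ : Set V) := hx
        have hc1' : c1 ∈ ({l}ᶜ : Set V) := fun hmem => G.irrefl (by
          cases hmem; exact hadjlc1)
        rw [hzz] at hx' hc1'
        rw [hx', hc1']
      refine exists_star_iso G l (fun x hx => ?_) (fun x y hx hy hxy => ?_)
      · rw [huniq x hx]; exact hadjlc1
      · rw [huniq x hx, huniq y hy] at hxy
        exact G.irrefl hxy
    · -- t = utx i : impossible
      exfalso
      have hadj : (myc G).Adj t w := by rw [ht]; exact myc_adj_uw G
      rcases step1 _ hadj with h1 | ⟨j, hj⟩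
      · exact h (h1.symm)
      · simp [hw] at hj
    · -- t = w : impossible
      exact absurd (by cases p2; exact ht) htne
  · -- φ⁻¹(w) is a shadow vertex
    have hcards : Fintype.card V = {a | G.Adj k a}.ncard + 1 := by
      have := hcard_iso φ.symm w
      rw [hz, hcardw, hcardu] at this
      exact this
    have h1 : ∀ a, a ≠ k → G.Adj k a := by
      have hsub : {a | G.Adj k a} ⊆ ({k}ᶜ : Set V) := by
        intro a ha
        exact fun hmem => G.irrefl (by cases hmem; exact ha)
      have heq : {a | G.Adj k a} = ({k}ᶜ : Set V) := by
        apply Set.eq_of_subset_of_ncard_le hsub _ (Set.toFinite _)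
        rw [compl_singleton_ncard]
        omega
      intro a ha
      have : a ∈ {a | G.Adj k a} := heq ▸ (ha : a ∈ ({k}ᶜ : Set V))
      exact this
    refine exists_star_iso G k h1 (fun a b ha hb hab => ?_)
    -- independence of non-center vertices
    have hmap : ∀ x : V, x ≠ k → ∃ i : V, φ (Sum.inl x) = Sum.inr (Sum.inl i) := by
      intro x hx
      have hadj : (myc G).Adj (Sum.inl x) (φ.symm w) := by
        rw [hz]
        exact (myc_adj_vu G).mpr (h1 x hx).symm
      have := φ.map_adj_iff.mpr hadj
      rw [φ.apply_symm_apply] at this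
      exact hnw _ this.symm
    obtain ⟨i, hi⟩ := hmap a ha
    obtain ⟨j, hj⟩ := hmap b hb
    have := φ.map_adj_iff.mpr ((myc_adj_vv G).mpr hab)
    rw [hi, hj] at this
    exact myc_not_adj_uu G this
  · -- φ⁻¹(w) = w : impossible
    exfalso
    apply h
    have hww : φ.symm w = w := by cases p; rw [hz]
    conv_lhs => rw [← hww]
    exact φ.apply_symm_apply w
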